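/- Let C be a δ-twisted conjugacy class of W and let J be a δ-stable subset of I that is minimal under inclusion among δ-stable subsets J'' with C ∩ W_{J''} ≠ ∅. Let w ∈ C ∩ W_J, let J' ⊆ I be δ-stable, and let x ∈ W. Then x w δ(x)⁻¹ ∈ W_{J'} if and only if x = x' x₁ for some x' ∈ W_{J'} and some x₁ ∈ W^δ ∩ ^{J'}W^J with x₁(J) ⊆ J'. -/

import Mathlib

/-!
STATEMENT 18. `(W, S)` a finite irreducible Coxeter system, `δ` an automorphism
permuting the simple reflections.  Let `C` be a δ-twisted conjugacy class, `J` a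
δ-stable subset of simple reflections minimal (under inclusion, among δ-stable
subsets) with `C ∩ W_J ≠ ∅`, `w ∈ C ∩ W_J`, and `J'` δ-stable.  Then for `x ∈ W`:
`x w δ(x)⁻¹ ∈ W_{J'}` iff `x = x' x₁` with `x' ∈ W_{J'}` and
`x₁ ∈ W^δ ∩ {}^{J'}W^{J}` satisfying `x₁(J) ⊆ J'`.
-/

noncomputable section

open List
open scoped Classical

/-- The δ-twisted conjugacy class of `w₀`. -/
def twClass {W : Type} [Group W] (δW : W ≃* W) (w₀ : W) : Set W :=
  {w | ∃ x : W, w = x * w₀ * (δW x)⁻¹}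

/-- The standard parabolic subgroup `W_J`. -/
def parab {B W : Type} [Group W] {M : CoxeterMatrix B} (cs : CoxeterSystem M W)
    (J : Set B) : Subgroup W :=
  Subgroup.closure (cs.simple '' J)

/-- `x` is the minimal length element of its double coset `W_{J'} x W_J`,
i.e. `x ∈ {}^{J'}W^{J}`. -/
def IsMinDoubleCoset {B W : Type} [Group W] {M : CoxeterMatrix B}
    (cs : CoxeterSystem M W) (J' J : Set B) (x : W) : Prop :=
  ∀ a ∈ parab cs J', ∀ b ∈ parab cs J, cs.length x ≤ cs.length (a * x * b)

/-- `x(J) ⊆ J'`: conjugation by `x` carries the simple reflections of `J` to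
simple reflections of `J'`. -/
def MapsSimples {B W : Type} [Group W] {M : CoxeterMatrix B}
    (cs : CoxeterSystem M W) (J J' : Set B) (x : W) : Prop :=
  ∀ j ∈ J, ∃ j' ∈ J', x * cs.simple j * x⁻¹ = cs.simple j'

namespace S18

variable {B W : Type} [Group W] {M : CoxeterMatrix B} (cs : CoxeterSystem M W)

local prefix:100 "s" => cs.simple
local prefix:100 "π" => cs.wordProd
local prefix:100 "ℓ" => cs.length
local prefix:100 "ris" => cs.rightInvSeq

theorem ris_cons (i : B) (ω : List B) :
    ris (i :: ω) = ((π ω)⁻¹ * s i * π ω) :: ris ω := rfl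

theorem conj_simple_cancel (i : B) (t : W) : s i * (s i * t * s i) * s i = t := by
  rw [← mul_assoc, ← mul_assoc, cs.simple_mul_simple_self, one_mul, mul_assoc,
    cs.simple_mul_simple_self, mul_one]

theorem conj_simple_eq_iff (i : B) (t : W) : (s i * t * s i = s i) ↔ (t = s i) := by
  constructor
  · intro h
    have := congrArg (fun z => s i * z * s i) h
    rwa [conj_simple_cancel, cs.simple_mul_simple_self, one_mul] at this
  · rintro h; rw [h, cs.simple_mul_simple_self, one_mul]

/-- The sign-flipping involution attached to a simple reflection. -/
def etaFun (i : B) : W × ZMod 2 → W × ZMod 2 :=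
  fun p => (s i * p.1 * s i, p.2 + if p.1 = s i then 1 else 0)

theorem etaFun_involutive (i : B) : Function.Involutive (etaFun cs i) := by
  rintro ⟨t, ε⟩
  simp only [etaFun]
  rw [Prod.mk.injEq]
  refine ⟨conj_simple_cancel cs i t, ?_⟩
  rcases em (t = s i) with h | h
  · rw [if_pos h]
    erw [if_pos ((conj_simple_eq_iff cs i t).2 h)]
    rw [add_assoc]
    have h11 : (1 : ZMod 2) + 1 = 0 := by decide
    rw [h11, add_zero]
  · rw [if_neg h]
    erw [if_neg (fun hc => h ((conj_simple_eq_iff cs i t).1 hc))]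
    rw [add_zero, add_zero]

def eta (i : B) : Equiv.Perm (W × ZMod 2) := (etaFun_involutive cs i).toPerm _

theorem eta_apply (i : B) (p : W × ZMod 2) :
    eta cs i p = (s i * p.1 * s i, p.2 + if p.1 = s i then 1 else 0) := rfl

theorem prod_eta_apply (ω : List B) (p : W × ZMod 2) :
    ((ω.map (eta cs)).prod) p =
      (π ω * p.1 * (π ω)⁻¹, p.2 + (((ris ω).count p.1 : ℕ) : ZMod 2)) := by
  induction ω generalizing p with
  | nil => simp
  | cons i ω ih =>
    rw [map_cons, prod_cons, Equiv.Perm.mul_apply, ih p, eta_apply, ris_cons,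
      cs.wordProd_cons]
    have hiff : (π ω * p.1 * (π ω)⁻¹ = s i) ↔ ((π ω)⁻¹ * s i * π ω = p.1) := by
      constructor
      · intro h; rw [← h]; group
      · intro h; rw [← h]; group
    rw [Prod.mk.injEq]
    constructor
    · rw [mul_inv_rev, cs.inv_simple]; group
    · show _ + _ + _ = _
      rw [count_cons]
      rcases em ((π ω)⁻¹ * s i * π ω = p.1) with h | h
      · rw [if_pos (hiff.2 h)]
        simp [h, add_assoc]
      · rw [if_neg (fun hc => h (hiff.1 hc))]
        simp [h]

open CoxeterSystem in
theorem pow_eta (i i' : B) (m : ℕ) :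
    ((alternatingWord i i' (2*m)).map (eta cs)).prod = (eta cs i * eta cs i') ^ m := by
  induction m with
  | zero => simp [alternatingWord]
  | succ m ih =>
    have h2 : 2*(m+1) = (2*m) + 1 + 1 := by ring
    rw [h2, alternatingWord_succ' i i' (2*m+1), alternatingWord_succ' i i' (2*m)]
    rw [if_neg (by simp [Nat.even_add_one]), if_pos (by simp)]
    rw [map_cons, map_cons, prod_cons, prod_cons, ih, pow_succ']
    rw [mul_assoc]

open CoxeterSystem in
theorem key_conj (i i' : B) (k : ℕ) :
    s i' * (s i * s i')^k = ((s i * s i')^k)⁻¹ * s i' := by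
  induction k with
  | zero => simp
  | succ k ih =>
    have hq : s i' * (s i * s i') = (s i * s i')⁻¹ * s i' := by
      rw [mul_inv_rev, cs.inv_simple, cs.inv_simple, ← mul_assoc]
    calc s i' * (s i * s i') ^ (k+1)
        = (s i' * (s i * s i')^k) * (s i * s i') := by rw [pow_succ, ← mul_assoc]
      _ = ((s i * s i')^k)⁻¹ * (s i' * (s i * s i')) := by rw [ih, mul_assoc]
      _ = ((s i * s i')^k)⁻¹ * ((s i * s i')⁻¹ * s i') := by rw [hq]
      _ = ((s i * s i')^(k+1))⁻¹ * s i' := by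
          rw [← mul_assoc, ← mul_inv_rev, ← pow_succ']

open CoxeterSystem in
theorem conj_aw (i i' : B) (n : ℕ) :
    (π (alternatingWord i i' n))⁻¹ * s (if Even n then i' else i) * π (alternatingWord i i' n)
      = π (alternatingWord i i' (2*n+1)) := by
  rw [cs.prod_alternatingWord_eq_mul_pow, cs.prod_alternatingWord_eq_mul_pow]
  have h2n1 : ¬ Even (2*n+1) := by simp [Nat.even_add_one, parity_simps]
  rw [if_neg h2n1]
  have hdiv : (2*n+1)/2 = n := by omega
  rw [hdiv]
  rcases Nat.even_or_odd n with he | ho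
  · rw [if_pos he, if_pos he, one_mul]
    obtain ⟨r, hr⟩ := he
    have hn2 : n / 2 = r := by omega
    rw [hn2]
    calc ((s i * s i')^r)⁻¹ * s i' * (s i * s i')^r
        = (s i' * (s i * s i')^r) * (s i * s i')^r := by rw [← key_conj]
      _ = s i' * (s i * s i')^n := by rw [mul_assoc, ← pow_add]; rw [hr]
  · rw [if_neg (Nat.not_even_iff_odd.mpr ho), if_neg (Nat.not_even_iff_odd.mpr ho)]
    obtain ⟨r, hr⟩ := ho
    have hn2 : n / 2 = r := by omega
    rw [hn2, hr]
    have hba2 : ∀ X : W, s i' * (s i * X) = (s i * s i')⁻¹ * X := by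
      intro X
      rw [mul_inv_rev, cs.inv_simple, cs.inv_simple, ← mul_assoc, mul_assoc]
    have hcomb : ((s i * s i')^r)⁻¹ * ((s i * s i')⁻¹ * (((s i * s i')^r)⁻¹ * s i'))
        = ((s i * s i')^(2*r+1))⁻¹ * s i' := by
      rw [← mul_assoc, ← mul_assoc, ← mul_inv_rev, ← mul_inv_rev]
      congr 2
      rw [← pow_succ', ← pow_add]
      congr 1
      omega
    calc (s i' * (s i * s i')^r)⁻¹ * s i * (s i' * (s i * s i')^r)
        = ((s i * s i')^r)⁻¹ * (s i' * (s i * (s i' * (s i * s i')^r))) := by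
          rw [mul_inv_rev, cs.inv_simple]
          simp only [mul_assoc]
      _ = ((s i * s i')^r)⁻¹ * ((s i * s i')⁻¹ * (s i' * (s i * s i')^r)) := by
          rw [hba2]
      _ = ((s i * s i')^r)⁻¹ * ((s i * s i')⁻¹ * (((s i * s i')^r)⁻¹ * s i')) := by
          rw [key_conj]
      _ = ((s i * s i')^(2*r+1))⁻¹ * s i' := hcomb
      _ = s i' * (s i * s i')^(2*r+1) := (key_conj cs i i' (2*r+1)).symm

open CoxeterSystem in
theorem aw_period (i i' : B) (n : ℕ) :
    π (alternatingWord i i' (n + 2 * M i i')) = π (alternatingWord i i' n) := by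
  rw [cs.prod_alternatingWord_eq_mul_pow, cs.prod_alternatingWord_eq_mul_pow]
  have he : Even (n + 2 * M i i') ↔ Even n := by simp [Nat.even_add, parity_simps]
  have hd : (n + 2 * M i i') / 2 = n / 2 + M i i' := by omega
  rw [hd, pow_add, cs.simple_mul_simple_pow, mul_one]
  rcases Nat.even_or_odd n with h | h
  · rw [if_pos h, if_pos (he.mpr h)]
  · rw [if_neg (Nat.not_even_iff_odd.mpr h), if_neg (fun hc => (Nat.not_even_iff_odd.mpr h) (he.mp hc))]

open CoxeterSystem in
theorem ris_aw (i i' : B) (n : ℕ) :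
    ris (alternatingWord i i' n)
      = (range n).map (fun k => π (alternatingWord i i' (2*(n-k) - 1))) := by
  induction n with
  | zero => simp [alternatingWord]
  | succ n ih =>
    rw [alternatingWord_succ', ris_cons, ih, range_succ_eq_map, map_cons]
    congr 1
    · have h1 : 2*(n+1-0) - 1 = 2*n+1 := by omega
      rw [h1]
      exact conj_aw cs i i' n
    · rw [map_map]
      apply map_congr_left
      intro k _
      simp only [Function.comp_apply, Nat.succ_sub_succ]

open CoxeterSystem in
theorem count_ris_aw_even (i i' : B) (t : W) :
    Even ((ris (alternatingWord i i' (2 * M i i'))).count t) := by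
  rw [ris_aw]
  have h2m : 2 * M i i' = M i i' + M i i' := by ring
  rw [h2m, range_add, map_append]
  have heq : map ((fun k => π (alternatingWord i i' (2*((M i i' + M i i')-k)-1)))
        ∘ (fun x => M i i' + x)) (range (M i i'))
      = map (fun k => π (alternatingWord i i' (2*((M i i' + M i i')-k)-1))) (range (M i i')) := by
    apply map_congr_left
    intro k hk
    rw [mem_range] at hk
    simp only [Function.comp_apply]
    have e1 : 2*((M i i' + M i i')-(M i i' + k))-1 = 2*(M i i' - k)-1 := by omega
    have e2 : 2*((M i i' + M i i')-k)-1 = (2*(M i i' - k)-1) + 2 * M i i' := by omega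
    rw [e1, e2, aw_period]
  rw [map_map, heq, count_append]
  exact ⟨_, rfl⟩

open CoxeterSystem in
theorem eta_liftable : M.IsLiftable (eta cs) := by
  intro i i'
  rw [← pow_eta]
  have hπ : π (alternatingWord i i' (2 * M i i')) = 1 := by
    rw [cs.prod_alternatingWord_eq_mul_pow, if_pos ⟨M i i', by ring⟩]
    have : 2 * M i i' / 2 = M i i' := by omega
    rw [this, cs.simple_mul_simple_pow, one_mul]
  apply Equiv.ext
  intro p
  rw [prod_eta_apply, hπ]
  obtain ⟨r, hr⟩ := count_ris_aw_even cs i i' p.1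
  rw [hr]
  have hz : ((r + r : ℕ) : ZMod 2) = 0 := by
    push_cast
    rw [← two_mul]
    have h2 : (2 : ZMod 2) = 0 := by decide
    rw [h2, zero_mul]
  rw [hz, add_zero, Equiv.Perm.one_apply, one_mul, inv_one, mul_one]

/-- The sign representation of the Coxeter group on `W × ZMod 2`. -/
def theta : W →* Equiv.Perm (W × ZMod 2) := cs.lift ⟨eta cs, eta_liftable cs⟩

theorem theta_simple (i : B) : theta cs (s i) = eta cs i :=
  cs.lift_apply_simple (eta_liftable cs) i

theorem theta_wordProd (ω : List B) : theta cs (π ω) = (ω.map (eta cs)).prod := by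
  induction ω with
  | nil => simp [cs.wordProd_nil]
  | cons i ω ih => rw [cs.wordProd_cons, map_mul, theta_simple, map_cons, prod_cons, ih]

/-- `nu w t` : the parity of the number of occurrences of `t` in any inversion
sequence of a word for `w`. -/
def nu (w t : W) : ZMod 2 := (theta cs w (t, 0)).2

theorem theta_apply (w : W) (p : W × ZMod 2) :
    theta cs w p = (w * p.1 * w⁻¹, p.2 + nu cs w p.1) := by
  obtain ⟨ω, rfl⟩ := cs.wordProd_surjective w
  rw [theta_wordProd, prod_eta_apply, nu, theta_wordProd, prod_eta_apply]
  simp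

theorem nu_eq_count (w t : W) (ω : List B) (hω : π ω = w) :
    nu cs w t = (((ris ω).count t : ℕ) : ZMod 2) := by
  rw [nu, ← hω, theta_wordProd, prod_eta_apply]
  simp

theorem nu_mul (w v t : W) : nu cs (w * v) t = nu cs v t + nu cs w (v * t * v⁻¹) := by
  have h := theta_apply cs (w * v) (t, 0)
  rw [map_mul, Equiv.Perm.mul_apply, theta_apply cs v (t, 0), theta_apply cs w _] at h
  have := congrArg Prod.snd h
  simp only at this
  simp only [zero_add] at this
  exact this.symm

theorem count_pal (i : B) (rho : List B) :
    Odd ((ris (rho ++ i :: rho.reverse)).count (π rho * s i * (π rho)⁻¹)) := by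
  induction rho with
  | nil =>
    simp only [nil_append, reverse_nil]
    rw [ris_cons]
    simp [cs.wordProd_nil]
  | cons j rho ih =>
    have hlist : (j :: rho) ++ i :: (j :: rho).reverse
        = j :: ((rho ++ i :: rho.reverse) ++ [j]) := by simp
    rw [hlist]
    set tau := rho ++ i :: rho.reverse with htau
    set t' := π rho * s i * (π rho)⁻¹ with ht'
    have hπτ : π tau = t' := by
      rw [htau, cs.wordProd_append, cs.wordProd_cons, cs.wordProd_reverse, ht', mul_assoc]
    have ht'sq : t' * t' = 1 := by
      rw [ht']
      simp [mul_assoc, cs.simple_mul_simple_cancel_left]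
    have ht'inv : t'⁻¹ = t' := inv_eq_of_mul_eq_one_left ht'sq
    have hπtj : π (tau ++ [j]) = t' * s j := by
      rw [cs.wordProd_append, hπτ, cs.wordProd_singleton]
    have hhead0 : (π (tau ++ [j]))⁻¹ * s j * π (tau ++ [j])
        = s j * (t' * (s j * (t' * s j))) := by
      rw [hπtj, mul_inv_rev, cs.inv_simple, ht'inv]
      simp only [mul_assoc]
    have htgt : π (j :: rho) * s i * (π (j :: rho))⁻¹ = s j * (t' * s j) := by
      rw [cs.wordProd_cons, mul_inv_rev, cs.inv_simple, ht']
      simp only [mul_assoc]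
    have hconc : ris (tau ++ [j]) = (map (⇑(MulAut.conj (s j))) (ris tau)) ++ [s j] := by
      have h := cs.rightInvSeq_concat tau j
      rw [concat_eq_append, concat_eq_append] at h
      exact h
    rw [htgt, ris_cons, hhead0, hconc, count_cons, count_append]
    have hmap : count (s j * (t' * s j)) (map (⇑(MulAut.conj (s j))) (ris tau))
        = count t' (ris tau) := by
      have h : s j * (t' * s j) = (MulAut.conj (s j)) t' := by
        rw [MulAut.conj_apply, cs.inv_simple]
        simp only [mul_assoc]
      rw [h, count_map_of_injective _ _ (MulEquiv.injective _)]
    rw [hmap]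
    have hiff2 : (s j = s j * (t' * s j)) ↔ t' = s j := by
      constructor
      · intro h
        nth_rewrite 1 [← mul_one (s j)] at h
        have h2 := mul_left_cancel h
        have h3 : t' = (s j)⁻¹ := eq_inv_of_mul_eq_one_left h2.symm
        rwa [cs.inv_simple] at h3
      · intro h
        rw [h, cs.simple_mul_simple_self, mul_one]
    have hiff1 : (s j * (t' * (s j * (t' * s j))) = s j * (t' * s j)) ↔ t' = s j := by
      constructor
      · intro h
        have h2 := mul_left_cancel (mul_left_cancel h)
        exact hiff2.mp h2.symm
      · intro h
        rw [h, cs.simple_mul_simple_cancel_left]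
    obtain ⟨c, hcnt⟩ := ih
    simp only [beq_iff_eq, count_singleton']
    rcases em (t' = s j) with hc | hc
    · rw [if_pos (hiff1.mpr hc), if_pos (hiff2.mpr hc)]
      exact ⟨c + 1, by omega⟩
    · rw [if_neg (fun h => hc (hiff1.mp h)), if_neg (fun h => hc (hiff2.mp h))]
      exact ⟨c, by omega⟩

theorem nu_refl {t : W} (ht : cs.IsReflection t) : nu cs t t = 1 := by
  obtain ⟨u, i, rfl⟩ := ht
  obtain ⟨rho, rfl⟩ := cs.wordProd_surjective u
  have hπ : π (rho ++ i :: rho.reverse) = π rho * s i * (π rho)⁻¹ := by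
    rw [cs.wordProd_append, cs.wordProd_cons, cs.wordProd_reverse, mul_assoc]
  rw [nu_eq_count cs _ _ _ hπ]
  obtain ⟨c, hc⟩ := count_pal cs i rho
  rw [hc]
  push_cast
  have h2 : (2 : ZMod 2) = 0 := by decide
  rw [h2]
  ring

theorem mem_ris_of_nu_one {w t : W} {ω : List B} (hω : π ω = w) (h : nu cs w t = 1) :
    t ∈ ris ω := by
  have hc := nu_eq_count cs w t ω hω
  rw [h] at hc
  rcases Nat.even_or_odd ((ris ω).count t) with he | ho
  · exfalso
    obtain ⟨c, hce⟩ := he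
    rw [hce] at hc
    push_cast at hc
    have h2 : (2 : ZMod 2) = 0 := by decide
    rw [← two_mul, h2, zero_mul] at hc
    have h10 : (1 : ZMod 2) ≠ 0 := by decide
    exact h10 hc
  · have hne : (ris ω).count t ≠ 0 := by
      intro h0; rw [h0] at ho; exact (Nat.not_odd_iff_even.mpr (Even.zero)) ho
    by_contra hmem
    exact hne (List.count_eq_zero.mpr hmem)

theorem nu_one_of_isRightInversion {w t : W} (ht : cs.IsReflection t)
    (hl : ℓ (w * t) < ℓ w) : nu cs w t = 1 := by
  by_contra h
  have h0 : nu cs w t = 0 := by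
    have : ∀ x : ZMod 2, x ≠ 1 → x = 0 := by decide
    exact this _ h
  have hmul : nu cs (w * t) t = 1 := by
    rw [nu_mul]
    have htt : t * t * t⁻¹ = t := by rw [ht.mul_self, one_mul, ht.inv]
    rw [htt, h0, add_zero, nu_refl cs ht]
  obtain ⟨ω, hred, hωw⟩ := cs.exists_reduced_word' (w * t)
  have hmem := mem_ris_of_nu_one cs hωw.symm hmul
  have hinv := cs.isRightInversion_of_mem_rightInvSeq hred hmem
  rw [← hωw] at hinv
  have : ℓ (w * t * t) < ℓ (w * t) := hinv.2
  rw [mul_assoc, ht.mul_self, mul_one] at this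
  omega

/-- Strong exchange property. -/
theorem strong_exchange {w t : W} (ω : List B) (hω : π ω = w) (ht : cs.IsReflection t)
    (hl : ℓ (w * t) < ℓ w) : ∃ j < ω.length, w * t = π (ω.eraseIdx j) := by
  have h1 := nu_one_of_isRightInversion cs ht hl
  have hmem := mem_ris_of_nu_one cs hω h1
  obtain ⟨j, hj, hval⟩ := List.mem_iff_getElem.mp hmem
  refine ⟨j, by simpa using hj, ?_⟩
  have hD : (ris ω).getD j 1 = t := by
    rw [List.getD_eq_getElem _ _ hj, hval]
  rw [← hω, ← hD]
  exact cs.wordProd_mul_getD_rightInvSeq ω j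

theorem deletion {ω : List B} (h : ¬ cs.IsReduced ω) :
    ∃ j k, j < k ∧ k < ω.length ∧ π ω = π ((ω.eraseIdx k).eraseIdx j) := by
  let P : ℕ → Prop := fun n => ¬ cs.IsReduced (ω.take n)
  have hex : ∃ n, P n := ⟨ω.length, by show ¬ cs.IsReduced (ω.take ω.length); rwa [take_length]⟩
  have hk0 : P (Nat.find hex) := Nat.find_spec hex
  have hmin : ∀ m < Nat.find hex, cs.IsReduced (ω.take m) :=
    fun m hm => not_not.mp (Nat.find_min hex hm)
  have hk0pos : Nat.find hex ≠ 0 := by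
    intro h0
    apply hk0
    rw [h0]
    simp [CoxeterSystem.IsReduced]
  obtain ⟨k, hk⟩ : ∃ k, Nat.find hex = k + 1 := ⟨Nat.find hex - 1, by omega⟩
  rw [hk] at hk0 hmin
  have hklt : k < ω.length := by
    by_contra hge
    push_neg at hge
    apply hk0
    rw [take_of_length_le (by omega)]
    have := hmin k (by omega)
    rwa [take_of_length_le hge] at this
  have hredk : cs.IsReduced (ω.take k) := hmin k (by omega)
  have htake : ω.take (k+1) = ω.take k ++ [ω[k]] := by
    rw [take_succ, getElem?_eq_getElem hklt]
    rfl
  have hlu : ℓ (π (ω.take k)) = k := by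
    rw [hredk]
    simp [hklt.le]
  have hlow : ℓ (π (ω.take k) * s ω[k]) < ℓ (π (ω.take k)) := by
    have hk0' : ¬ cs.IsReduced (ω.take (k+1)) := hk0
    rw [htake] at hk0'
    have hlen1 : (ω.take k ++ [ω[k]]).length = k + 1 := by
      simp
      omega
    have hne : ℓ (π (ω.take k) * s ω[k]) ≠ k + 1 := by
      intro hcontra
      apply hk0'
      show ℓ (π (ω.take k ++ [ω[k]])) = _
      rw [cs.wordProd_append, cs.wordProd_singleton, hlen1]
      exact hcontra
    rcases cs.length_mul_simple (π (ω.take k)) ω[k] with hup | hdn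
    · exfalso; rw [hlu] at hup; exact hne hup
    · rw [hlu] at hdn ⊢; omega
  obtain ⟨j, hj, hjeq⟩ := strong_exchange cs (ω.take k) rfl (cs.isReflection_simple ω[k]) hlow
  rw [length_take, min_eq_left hklt.le] at hj
  refine ⟨j, k, hj, hklt, ?_⟩
  have herase : (ω.eraseIdx k).eraseIdx j = (ω.take k).eraseIdx j ++ ω.drop (k+1) := by
    rw [eraseIdx_eq_take_drop_succ ω k]
    exact List.eraseIdx_append_of_lt_length (by rw [length_take]; omega) _
  calc π ω = π (ω.take (k+1) ++ ω.drop (k+1)) := by rw [take_append_drop]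
    _ = π (ω.take k) * s ω[k] * π (ω.drop (k+1)) := by
        rw [cs.wordProd_append, htake, cs.wordProd_append, cs.wordProd_singleton]
    _ = π ((ω.take k).eraseIdx j) * π (ω.drop (k+1)) := by rw [hjeq]
    _ = π ((ω.eraseIdx k).eraseIdx j) := by rw [herase, cs.wordProd_append]

theorem exists_reduced_sublist : ∀ (n : ℕ) (ω : List B), ω.length ≤ n →
    ∃ ω', ω'.Sublist ω ∧ π ω' = π ω ∧ cs.IsReduced ω' := by
  intro n
  induction n with
  | zero =>
    intro ω hω
    rw [Nat.le_zero, length_eq_zero_iff] at hω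
    exact ⟨ω, Sublist.refl ω, rfl, by simp [hω, CoxeterSystem.IsReduced]⟩
  | succ n ih =>
    intro ω hω
    by_cases hred : cs.IsReduced ω
    · exact ⟨ω, Sublist.refl ω, rfl, hred⟩
    · obtain ⟨j, k, hjk, hk, heq⟩ := deletion cs hred
      have hsub : ((ω.eraseIdx k).eraseIdx j).Sublist ω :=
        (List.eraseIdx_sublist _ j).trans (List.eraseIdx_sublist _ k)
      have hlen : ((ω.eraseIdx k).eraseIdx j).length ≤ n := by
        have h1 : (ω.eraseIdx k).length + 1 = ω.length := List.length_eraseIdx_add_one hk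
        have h2 : ((ω.eraseIdx k).eraseIdx j).length + 1 = (ω.eraseIdx k).length :=
          List.length_eraseIdx_add_one (by omega)
        omega
      obtain ⟨ω', hs, hp, hr⟩ := ih _ hlen
      exact ⟨ω', hs.trans hsub, by rw [hp, ← heq], hr⟩

theorem mem_parab_iff (J : Set B) (w : W) :
    w ∈ parab cs J ↔ ∃ ω : List B, (∀ b ∈ ω, b ∈ J) ∧ π ω = w := by
  constructor
  · intro hw
    induction hw using Subgroup.closure_induction with
    | mem x hx =>
      obtain ⟨j, hj, rfl⟩ := hx
      exact ⟨[j], by simpa using hj, by simp⟩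
    | one => exact ⟨[], by simp, by simp⟩
    | mul a b _ _ iha ihb =>
      obtain ⟨ωa, ha, rfl⟩ := iha
      obtain ⟨ωb, hb, rfl⟩ := ihb
      refine ⟨ωa ++ ωb, ?_, by rw [cs.wordProd_append]⟩
      intro x hx
      rcases mem_append.mp hx with hxa | hxb
      · exact ha x hxa
      · exact hb x hxb
    | inv a _ iha =>
      obtain ⟨ωa, ha, rfl⟩ := iha
      exact ⟨ωa.reverse, by intro x hx; exact ha x (mem_reverse.mp hx), by simp⟩
  · rintro ⟨ω, hJ, rfl⟩
    induction ω with
    | nil => simp only [cs.wordProd_nil]; exact one_mem _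
    | cons i ω ih =>
      rw [cs.wordProd_cons]
      exact mul_mem (Subgroup.subset_closure ⟨i, hJ i (by simp), rfl⟩)
        (ih (fun b hb => hJ b (by simp [hb])))

theorem parab_reduced {J : Set B} {w : W} (hw : w ∈ parab cs J) :
    ∃ ω, (∀ b ∈ ω, b ∈ J) ∧ π ω = w ∧ cs.IsReduced ω := by
  obtain ⟨ω, hJ, rfl⟩ := (mem_parab_iff cs J w).mp hw
  obtain ⟨ω', hs, hp, hr⟩ := exists_reduced_sublist cs ω.length ω le_rfl
  exact ⟨ω', fun b hb => hJ b (hs.subset hb), hp, hr⟩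

theorem parab_simple_of_length_one {J : Set B} {w : W} (hw : w ∈ parab cs J)
    (hl : ℓ w = 1) : ∃ j ∈ J, w = s j := by
  obtain ⟨ω, hJ, rfl, hred⟩ := parab_reduced cs hw
  have hlen : ω.length = 1 := by rw [← hred, hl]
  match ω, hlen with
  | [j], _ => exact ⟨j, hJ j (by simp), by simp⟩

theorem parab_right_descent {J : Set B} {w : W} (hw : w ∈ parab cs J) (hne : w ≠ 1) :
    ∃ j ∈ J, w * s j ∈ parab cs J ∧ ℓ (w * s j) + 1 = ℓ w := by
  obtain ⟨ω, hJ, rfl, hred⟩ := parab_reduced cs hw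
  rcases List.eq_nil_or_concat ω with rfl | ⟨ω'', j, rfl⟩
  · exact absurd (by simp) hne
  · rw [concat_eq_append] at *
    refine ⟨j, hJ j (by simp), ?_, ?_⟩
    · have hmul : π (ω'' ++ [j]) * s j = π ω'' := by
        rw [cs.wordProd_append, cs.wordProd_singleton, mul_assoc,
          cs.simple_mul_simple_self, mul_one]
      rw [hmul]
      exact (mem_parab_iff cs J _).mpr ⟨ω'', fun b hb => hJ b (by simp [hb]), rfl⟩
    · have hmul : π (ω'' ++ [j]) * s j = π ω'' := by
        rw [cs.wordProd_append, cs.wordProd_singleton, mul_assoc,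
          cs.simple_mul_simple_self, mul_one]
      rw [hmul]
      have hred'' : cs.IsReduced ω'' := by
        have := hred.take ω''.length
        rwa [List.take_left] at this
      rw [hred'', hred]
      simp

theorem simple_mem_parab {J : Set B} {j : B} (hj : j ∈ J) : s j ∈ parab cs J :=
  Subgroup.subset_closure ⟨j, hj, rfl⟩

theorem length_mul_right_add {J : Set B} {x : W}
    (hmin : ∀ u ∈ parab cs J, ℓ x ≤ ℓ (x * u)) :
    ∀ u ∈ parab cs J, ℓ (x * u) = ℓ x + ℓ u := by
  suffices H : ∀ n, ∀ u ∈ parab cs J, ℓ u ≤ n → ℓ (x * u) = ℓ x + ℓ u from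
    fun u hu => H (ℓ u) u hu le_rfl
  intro n
  induction n with
  | zero =>
    intro u hu hl
    have : u = 1 := cs.length_eq_zero_iff.mp (by omega)
    simp [this]
  | succ n ih =>
    intro u hu hl
    by_cases hone : u = 1
    · simp [hone]
    obtain ⟨j, hjJ, hu', hl'⟩ := parab_right_descent cs hu hone
    have ihu' : ℓ (x * (u * s j)) = ℓ x + ℓ (u * s j) := ih _ hu' (by omega)
    have hxu : x * u = (x * (u * s j)) * s j := by
      rw [mul_assoc, mul_assoc, cs.simple_mul_simple_self, mul_one]
    rcases cs.length_mul_simple (x * (u * s j)) j with hup | hdn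
    · rw [hxu, hup, ihu']
      omega
    · exfalso
      -- build a reduced word for x * (u * s j) and apply strong exchange
      obtain ⟨ωx, hredx, hπx⟩ := cs.exists_reduced_word' x
      obtain ⟨ωu, hJu, hπu, hredu⟩ := parab_reduced cs hu'
      have hπ : π (ωx ++ ωu) = x * (u * s j) := by
        rw [cs.wordProd_append, ← hπx, hπu]
      have hlow : ℓ (x * (u * s j) * s j) < ℓ (x * (u * s j)) := by omega
      obtain ⟨m, hm, hmeq⟩ := strong_exchange cs (ωx ++ ωu) hπ
        (cs.isReflection_simple j) hlow
      rw [length_append] at hm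
      by_cases hcase : m < ωx.length
      · rw [List.eraseIdx_append_of_lt_length hcase] at hmeq
        rw [cs.wordProd_append, hπu] at hmeq
        -- hmeq : x * (u * s j) * s j = π (ωx.eraseIdx m) * (u * s j)
        have hxt : x * ((u * s j) * s j * (u * s j)⁻¹) = π (ωx.eraseIdx m) := by
          have hstep : x * ((u * s j) * s j * (u * s j)⁻¹)
              = (x * (u * s j) * s j) * (u * s j)⁻¹ := by group
          rw [hstep, hmeq]
          group
        have hmem2 : (u * s j) * s j * (u * s j)⁻¹ ∈ parab cs J :=
          mul_mem (mul_mem hu' (simple_mem_parab cs hjJ)) (inv_mem hu')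
        have hge := hmin _ hmem2
        rw [hxt] at hge
        have hle : ℓ (π (ωx.eraseIdx m)) ≤ ωx.length - 1 := by
          have h1 := cs.length_wordProd_le (ωx.eraseIdx m)
          have h2 : (ωx.eraseIdx m).length + 1 = ωx.length :=
            List.length_eraseIdx_add_one hcase
          omega
        have hlx : ℓ x = ωx.length := by rw [hπx]; exact hredx
        omega
      · push_neg at hcase
        rw [List.eraseIdx_append_of_length_le hcase] at hmeq
        rw [cs.wordProd_append, ← hπx] at hmeq
        have hmeq' : x * ((u * s j) * s j) = x * π (ωu.eraseIdx (m - ωx.length)) := by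
          rw [← mul_assoc]; exact hmeq
        have hcancel : u = π (ωu.eraseIdx (m - ωx.length)) := by
          have h3 := mul_left_cancel hmeq'
          rwa [mul_assoc, cs.simple_mul_simple_self, mul_one] at h3
        have hle : ℓ u ≤ ωu.length - 1 := by
          have h1 := cs.length_wordProd_le (ωu.eraseIdx (m - ωx.length))
          have h2 : (ωu.eraseIdx (m - ωx.length)).length + 1 = ωu.length :=
            List.length_eraseIdx_add_one (by omega)
          rw [← hcancel] at h1
          omega
        have hlu' : ℓ (u * s j) = ωu.length := by rw [← hπu]; exact hredu
        omega

theorem length_mul_left_add {J' : Set B} {x : W}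
    (hmin : ∀ v ∈ parab cs J', ℓ x ≤ ℓ (v * x)) :
    ∀ v ∈ parab cs J', ℓ (v * x) = ℓ v + ℓ x := by
  intro v hv
  have hminR : ∀ u ∈ parab cs J', ℓ x⁻¹ ≤ ℓ (x⁻¹ * u) := by
    intro u hu
    have h1 := hmin u⁻¹ (inv_mem hu)
    calc ℓ x⁻¹ = ℓ x := cs.length_inv x
      _ ≤ ℓ (u⁻¹ * x) := h1
      _ = ℓ ((u⁻¹ * x)⁻¹) := (cs.length_inv _).symm
      _ = ℓ (x⁻¹ * u) := by rw [mul_inv_rev, inv_inv]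
  have h2 := length_mul_right_add cs hminR v⁻¹ (inv_mem hv)
  calc ℓ (v * x) = ℓ ((v * x)⁻¹) := (cs.length_inv _).symm
    _ = ℓ (x⁻¹ * v⁻¹) := by rw [mul_inv_rev]
    _ = ℓ x⁻¹ + ℓ v⁻¹ := h2
    _ = ℓ v + ℓ x := by rw [cs.length_inv, cs.length_inv]; omega

theorem minR_of_isMin {J' J : Set B} {x : W} (hx : IsMinDoubleCoset cs J' J x) :
    ∀ u ∈ parab cs J, ℓ x ≤ ℓ (x * u) := by
  intro u hu
  have := hx 1 (one_mem _) u hu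
  rwa [one_mul] at this

theorem minL_of_isMin {J' J : Set B} {x : W} (hx : IsMinDoubleCoset cs J' J x) :
    ∀ v ∈ parab cs J', ℓ x ≤ ℓ (v * x) := by
  intro v hv
  have := hx v hv 1 (one_mem _)
  rwa [mul_one] at this

theorem kilmoyer {J' J : Set B} {x : W} (hx : IsMinDoubleCoset cs J' J x) :
    ∀ u ∈ parab cs J, x * u * x⁻¹ ∈ parab cs J' →
      u ∈ parab cs {j | j ∈ J ∧ ∃ j' ∈ J', x * cs.simple j * x⁻¹ = cs.simple j'} := by
  have hRadd := length_mul_right_add cs (minR_of_isMin cs hx)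
  have hLadd := length_mul_left_add cs (minL_of_isMin cs hx)
  suffices H : ∀ n, ∀ u ∈ parab cs J, ℓ u ≤ n → x * u * x⁻¹ ∈ parab cs J' →
      u ∈ parab cs {j | j ∈ J ∧ ∃ j' ∈ J', x * cs.simple j * x⁻¹ = cs.simple j'} from
    fun u hu hv => H (ℓ u) u hu le_rfl hv
  intro n
  induction n with
  | zero =>
    intro u _ hl _
    have : u = 1 := cs.length_eq_zero_iff.mp (by omega)
    rw [this]; exact one_mem _
  | succ n ih =>
    intro u hu hl hv
    by_cases hone : u = 1
    · rw [hone]; exact one_mem _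
    obtain ⟨j, hjJ, hu', hl'⟩ := parab_right_descent cs hu hone
    have hvx : (x * u * x⁻¹) * x = x * u := by group
    have hlvx : ℓ ((x * u * x⁻¹) * x) = ℓ (x * u * x⁻¹) + ℓ x := hLadd _ hv
    have hlow : ℓ ((x * u * x⁻¹) * x * s j) < ℓ ((x * u * x⁻¹) * x) := by
      have h1 : (x * u * x⁻¹) * x * s j = x * (u * s j) := by group
      rw [h1, hvx, hRadd _ hu', hRadd _ hu]
      omega
    obtain ⟨ωv, hJv, hπv, hredv⟩ := parab_reduced cs hv
    obtain ⟨ωx, hredx, hπx⟩ := cs.exists_reduced_word' x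
    have hπ : π (ωv ++ ωx) = (x * u * x⁻¹) * x := by
      rw [cs.wordProd_append, hπv, ← hπx]
    obtain ⟨m, hm, hmeq⟩ := strong_exchange cs (ωv ++ ωx) hπ
      (cs.isReflection_simple j) hlow
    rw [length_append] at hm
    by_cases hcase : m < ωv.length
    · rw [List.eraseIdx_append_of_lt_length hcase] at hmeq
      rw [cs.wordProd_append, ← hπx] at hmeq
      -- hmeq : (x u x⁻¹) * x * s j = π (ωv.eraseIdx m) * x
      have hvt : π (ωv.eraseIdx m) ∈ parab cs J' :=
        (mem_parab_iff cs J' _).mpr ⟨ωv.eraseIdx m,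
          fun b hb => hJv b ((List.eraseIdx_sublist _ m).subset hb), rfl⟩
      have hr : x * s j * x⁻¹ = (x * u * x⁻¹)⁻¹ * π (ωv.eraseIdx m) := by
        have h1 : x * s j = (x * u * x⁻¹)⁻¹ * ((x * u * x⁻¹) * x * s j) := by group
        rw [h1, hmeq]
        group
      have hrmem : x * s j * x⁻¹ ∈ parab cs J' := by
        rw [hr]; exact mul_mem (inv_mem hv) hvt
      have hlxsj : ℓ (x * s j) = ℓ x + 1 := by
        rcases cs.length_mul_simple x j with hup | hdn
        · exact hup
        · exfalso
          have := minR_of_isMin cs hx (s j) (simple_mem_parab cs hjJ)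
          omega
      have hlr : ℓ (x * s j * x⁻¹) = 1 := by
        have h1 : (x * s j * x⁻¹) * x = x * s j := by group
        have h2 := hLadd _ hrmem
        rw [h1, hlxsj] at h2
        omega
      obtain ⟨j', hj', hjeq⟩ := parab_simple_of_length_one cs hrmem hlr
      have hK : j ∈ {j | j ∈ J ∧ ∃ j' ∈ J', x * cs.simple j * x⁻¹ = cs.simple j'} :=
        ⟨hjJ, j', hj', hjeq⟩
      have hu'v : x * (u * s j) * x⁻¹ ∈ parab cs J' := by
        have h1 : x * (u * s j) * x⁻¹ = (x * u * x⁻¹) * (x * s j * x⁻¹) := by group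
        rw [h1]
        exact mul_mem hv hrmem
      have ihm := ih (u * s j) hu' (by omega) hu'v
      have huu : u = (u * s j) * s j := by
        rw [mul_assoc, cs.simple_mul_simple_self, mul_one]
      rw [huu]
      exact mul_mem ihm (simple_mem_parab cs hK)
    · push_neg at hcase
      exfalso
      rw [List.eraseIdx_append_of_length_le hcase] at hmeq
      rw [cs.wordProd_append, hπv] at hmeq
      -- hmeq : (x u x⁻¹) * x * s j = (x u x⁻¹) * π (ωx.eraseIdx (m - ωv.length))
      have hmeq' : (x * u * x⁻¹) * (x * s j)
          = (x * u * x⁻¹) * π (ωx.eraseIdx (m - ωv.length)) := by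
        rw [← mul_assoc]; exact hmeq
      have hcancel := mul_left_cancel hmeq'
      have hle : ℓ (x * s j) ≤ ωx.length - 1 := by
        have h1 := cs.length_wordProd_le (ωx.eraseIdx (m - ωv.length))
        have h2 : (ωx.eraseIdx (m - ωv.length)).length + 1 = ωx.length :=
          List.length_eraseIdx_add_one (by omega)
        rw [← hcancel] at h1
        omega
      have hlx : ℓ x = ωx.length := by rw [hπx]; exact hredx
      have := minR_of_isMin cs hx (s j) (simple_mem_parab cs hjJ)
      omega

theorem eraseIdx_append3 {α : Type*} (p q r : List α) (n : ℕ)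
    (hn : n < (p ++ q ++ r).length) :
    ∃ p' q' r', p'.Sublist p ∧ q'.Sublist q ∧ r'.Sublist r ∧
      (p ++ q ++ r).eraseIdx n = p' ++ q' ++ r' ∧
      p'.length + q'.length + r'.length + 1 = p.length + q.length + r.length := by
  simp only [length_append] at hn
  by_cases h1 : n < p.length
  · refine ⟨p.eraseIdx n, q, r, List.eraseIdx_sublist _ _, .refl _, .refl _, ?_, ?_⟩
    · rw [List.eraseIdx_append_of_lt_length (by rw [length_append]; omega) r,
        List.eraseIdx_append_of_lt_length h1 q]
    · have := List.length_eraseIdx_add_one h1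
      omega
  · push_neg at h1
    by_cases h2 : n < p.length + q.length
    · refine ⟨p, q.eraseIdx (n - p.length), r, .refl _, List.eraseIdx_sublist _ _, .refl _,
        ?_, ?_⟩
      · rw [List.eraseIdx_append_of_lt_length (by rw [length_append]; omega) r,
          List.eraseIdx_append_of_length_le h1 q]
      · have := List.length_eraseIdx_add_one (l := q) (i := n - p.length) (by omega)
        omega
    · push_neg at h2
      refine ⟨p, q, r.eraseIdx (n - p.length - q.length), .refl _, .refl _,
        List.eraseIdx_sublist _ _, ?_, ?_⟩
      · rw [List.eraseIdx_append_of_length_le (by rw [length_append]; omega) r]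
        congr 1
        rw [length_append]
        congr 1
        omega
      · have := List.length_eraseIdx_add_one (l := r) (i := n - p.length - q.length)
          (by omega)
        omega

theorem coset_decomp {J' J : Set B} {x : W} (hx : IsMinDoubleCoset cs J' J x) :
    ∀ v ∈ parab cs J', ∀ u ∈ parab cs J,
    ∃ v' u', v' ∈ parab cs J' ∧ u' ∈ parab cs J ∧ v * x * u = v' * x * u' ∧
      ℓ (v * x * u) = ℓ v' + ℓ x + ℓ u' := by
  suffices H : ∀ n, ∀ v ∈ parab cs J', ∀ u ∈ parab cs J, ℓ v + ℓ u ≤ n →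
      ∃ v' u', v' ∈ parab cs J' ∧ u' ∈ parab cs J ∧ v * x * u = v' * x * u' ∧
        ℓ (v * x * u) = ℓ v' + ℓ x + ℓ u' from
    fun v hv u hu => H (ℓ v + ℓ u) v hv u hu le_rfl
  intro n
  induction n using Nat.strong_induction_on with
  | _ n ih =>
  intro v hv u hu hn
  by_cases heq : ℓ (v * x * u) = ℓ v + ℓ x + ℓ u
  · exact ⟨v, u, hv, hu, rfl, heq⟩
  · have hle : ℓ (v * x * u) ≤ ℓ v + ℓ x + ℓ u := by
      have h1 := cs.length_mul_le (v * x) u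
      have h2 := cs.length_mul_le v x
      omega
    have hlt : ℓ (v * x * u) < ℓ v + ℓ x + ℓ u := by omega
    obtain ⟨ωv, hJv, hπv, hredv⟩ := parab_reduced cs hv
    obtain ⟨ωx, hredx, hπx⟩ := cs.exists_reduced_word' x
    obtain ⟨ωu, hJu, hπu, hredu⟩ := parab_reduced cs hu
    have hπbig : π (ωv ++ ωx ++ ωu) = v * x * u := by
      rw [cs.wordProd_append, cs.wordProd_append, hπv, hπu, ← hπx]
    have hlenbig : (ωv ++ ωx ++ ωu).length = ℓ v + ℓ x + ℓ u := by
      simp only [length_append]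
      rw [← hredv, ← hredx, ← hredu, hπv, hπu, ← hπx]
    have hnotred : ¬ cs.IsReduced (ωv ++ ωx ++ ωu) := by
      intro hred
      rw [CoxeterSystem.IsReduced, hπbig, hlenbig] at hred
      omega
    obtain ⟨a, b, hab, hb, hdel⟩ := deletion cs hnotred
    obtain ⟨p1, q1, r1, hp1, hq1, hr1, herase1, hlen1⟩ :=
      eraseIdx_append3 ωv ωx ωu b hb
    have hjlt : a < (p1 ++ q1 ++ r1).length := by
      simp only [length_append] at hb ⊢
      omega
    obtain ⟨p2, q2, r2, hp2, hq2, hr2, herase2, hlen2⟩ :=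
      eraseIdx_append3 p1 q1 r1 a hjlt
    rw [herase1, herase2] at hdel
    -- hdel : π (ωv ++ ωx ++ ωu) = π (p2 ++ q2 ++ r2)
    have hP : p2.Sublist ωv := hp2.trans hp1
    have hQ : q2.Sublist ωx := hq2.trans hq1
    have hR : r2.Sublist ωu := hr2.trans hr1
    have hv2 : π p2 ∈ parab cs J' :=
      (mem_parab_iff cs J' _).mpr ⟨p2, fun c hc => hJv c (hP.subset hc), rfl⟩
    have hu2 : π r2 ∈ parab cs J :=
      (mem_parab_iff cs J _).mpr ⟨r2, fun c hc => hJu c (hR.subset hc), rfl⟩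
    have hprod : v * x * u = π p2 * π q2 * π r2 := by
      rw [← hπbig, hdel, cs.wordProd_append, cs.wordProd_append]
    by_cases hq : q2.length < ωx.length
    · exfalso
      -- the middle got shorter: contradicts minimality of x
      have hxq : ((π p2)⁻¹ * v) * x * (u * (π r2)⁻¹) = π q2 := by
        have h0 : (π p2)⁻¹ * (v * x * u) * (π r2)⁻¹ = π q2 := by rw [hprod]; group
        rw [← h0]; group
      have hmin := hx ((π p2)⁻¹ * v) (mul_mem (inv_mem hv2) hv)
        (u * (π r2)⁻¹) (mul_mem hu (inv_mem hu2))
      rw [hxq] at hmin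
      have h1 := cs.length_wordProd_le q2
      have hlx : ℓ x = ωx.length := by rw [hπx]; exact hredx
      omega
    · push_neg at hq
      have hq2eq : q2 = ωx := hQ.eq_of_length (le_antisymm hQ.length_le hq)
      have hlv2 : ℓ (π p2) + ℓ (π r2) < ℓ v + ℓ u := by
        have h1 := cs.length_wordProd_le p2
        have h2 := cs.length_wordProd_le r2
        have h3 : ℓ v = ωv.length := by rw [← hredv, hπv]
        have h4 : ℓ u = ωu.length := by rw [← hredu, hπu]
        have h5 : q1.length ≤ ωx.length := hq1.length_le
        have h6 : q2.length = ωx.length := by rw [hq2eq]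
        have h7 : q2.length ≤ q1.length := hq2.length_le
        omega
      have hprod2 : v * x * u = π p2 * x * π r2 := by
        rw [hprod, hq2eq, ← hπx]
      obtain ⟨v', u', hv', hu', heq', hlen'⟩ :=
        ih (ℓ (π p2) + ℓ (π r2)) (by omega) (π p2) hv2 (π r2) hu2 le_rfl
      have hfinal1 : v * x * u = v' * x * u' := by rw [hprod2, heq']
      have hfinal2 : ℓ (v * x * u) = ℓ v' + ℓ x + ℓ u' := by rw [hprod2]; exact hlen'
      exact ⟨v', u', hv', hu', hfinal1, hfinal2⟩

theorem min_unique {J' J : Set B} {x y : W} (hx : IsMinDoubleCoset cs J' J x)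
    (hy : IsMinDoubleCoset cs J' J y) {v u : W} (hv : v ∈ parab cs J')
    (hu : u ∈ parab cs J) (hyx : y = v * x * u) : y = x := by
  obtain ⟨v', u', hv', hu', heq, hlen⟩ := coset_decomp cs hx v hv u hu
  rw [← hyx] at heq hlen
  have h1 : ℓ y ≤ ℓ x := by
    have hxy : x = v'⁻¹ * y * u'⁻¹ := by rw [heq]; group
    have := hy v'⁻¹ (inv_mem hv') u'⁻¹ (inv_mem hu')
    rw [← hxy] at this
    exact this
  have h2 : ℓ x ≤ ℓ y := by
    have := hx v' hv' u' hu'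
    rw [← heq] at this
    exact this
  have hv0 : ℓ v' = 0 := by omega
  have hu0 : ℓ u' = 0 := by omega
  rw [heq, cs.length_eq_zero_iff.mp hv0, cs.length_eq_zero_iff.mp hu0, one_mul, mul_one]

theorem exists_min (J' J : Set B) (x : W) :
    ∃ x₁, IsMinDoubleCoset cs J' J x₁ ∧
      ∃ v ∈ parab cs J', ∃ u ∈ parab cs J, x = v * x₁ * u := by
  have hSne : ∃ n, ∃ a ∈ parab cs J', ∃ b ∈ parab cs J, ℓ (a * x * b) = n :=
    ⟨ℓ x, 1, one_mem _, 1, one_mem _, by rw [one_mul, mul_one]⟩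
  obtain ⟨a, ha, b, hb, hab⟩ := Nat.find_spec hSne
  refine ⟨a * x * b, ?_, a⁻¹, inv_mem ha, b⁻¹, inv_mem hb, by group⟩
  intro a' ha' b' hb'
  have hmem : ∃ c ∈ parab cs J', ∃ d ∈ parab cs J,
      ℓ (c * x * d) = ℓ (a' * (a * x * b) * b') :=
    ⟨a' * a, mul_mem ha' ha, b * b', mul_mem hb hb',
      by congr 1; group⟩
  have := Nat.find_min' hSne hmem
  omega

section Delta

variable (δI : Equiv.Perm B) (δW : W ≃* W)

theorem delta_wordProd (hδ : ∀ i : B, δW (cs.simple i) = cs.simple (δI i)) (ω : List B) :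
    δW (π ω) = π (ω.map δI) := by
  induction ω with
  | nil => simp
  | cons i ω ih => rw [cs.wordProd_cons, map_mul, hδ, ih, map_cons, cs.wordProd_cons]

theorem delta_symm_simple (hδ : ∀ i : B, δW (cs.simple i) = cs.simple (δI i)) (i : B) :
    δW.symm (s i) = s (δI.symm i) := by
  have h := hδ (δI.symm i)
  rw [Equiv.apply_symm_apply] at h
  rw [← h, MulEquiv.symm_apply_apply]

theorem delta_length (hδ : ∀ i : B, δW (cs.simple i) = cs.simple (δI i)) (w : W) :
    ℓ (δW w) = ℓ w := by
  have haux : ∀ (δI' : Equiv.Perm B) (δW' : W ≃* W),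
      (∀ i, δW' (cs.simple i) = cs.simple (δI' i)) → ∀ v : W, ℓ (δW' v) ≤ ℓ v := by
    intro δI' δW' hδ' v
    obtain ⟨ω, hl, hπ⟩ := cs.exists_reduced_word v
    rw [hπ, delta_wordProd cs δI' δW' hδ']
    have := cs.length_wordProd_le (ω.map δI')
    rwa [length_map, ← (hl : ℓ (π ω) = ω.length)] at this
  have h1 := haux δI δW hδ w
  have h2 := haux δI.symm δW.symm (delta_symm_simple cs δI δW hδ) (δW w)
  rw [MulEquiv.symm_apply_apply] at h2
  omega

theorem delta_parab {J : Set B} (hJ : δI '' J = J)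
    (hδ : ∀ i : B, δW (cs.simple i) = cs.simple (δI i)) {w : W} (hw : w ∈ parab cs J) :
    δW w ∈ parab cs J := by
  obtain ⟨ω, hJw, rfl⟩ := (mem_parab_iff cs J _).mp hw
  rw [delta_wordProd cs δI δW hδ]
  refine (mem_parab_iff cs J _).mpr ⟨ω.map δI, ?_, rfl⟩
  intro b hb
  obtain ⟨c, hc, rfl⟩ := List.mem_map.mp hb
  rw [← hJ]
  exact Set.mem_image_of_mem _ (hJw c hc)

end Delta

theorem conj_parab {J J' : Set B} {x : W} (hm : MapsSimples cs J J' x) {u : W}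
    (hu : u ∈ parab cs J) : x * u * x⁻¹ ∈ parab cs J' := by
  obtain ⟨ω, hJw, rfl⟩ := (mem_parab_iff cs J _).mp hu
  induction ω with
  | nil =>
    rw [cs.wordProd_nil, mul_one, mul_inv_cancel]
    exact one_mem _
  | cons i ω ih =>
    have hsplit : x * π (i :: ω) * x⁻¹ = (x * s i * x⁻¹) * (x * π ω * x⁻¹) := by
      rw [cs.wordProd_cons]; group
    rw [hsplit]
    obtain ⟨j', hj', hconj⟩ := hm i (hJw i (by simp))
    refine mul_mem ?_ (ih (fun b hb => hJw b (by simp [hb]))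
      ((mem_parab_iff cs J _).mpr ⟨ω, fun b hb => hJw b (by simp [hb]), rfl⟩))
    rw [hconj]
    exact simple_mem_parab cs hj'

theorem twClass_conj (δW : W ≃* W) (w₀ : W) {w : W} (hw : w ∈ twClass δW w₀) (u : W) :
    u * w * (δW u)⁻¹ ∈ twClass δW w₀ := by
  obtain ⟨g, rfl⟩ := hw
  refine ⟨u * g, ?_⟩
  rw [map_mul, mul_inv_rev]
  group

end S18

theorem statement18
    (B : Type) [DecidableEq B] [Fintype B]
    (W : Type) [Group W] [Fintype W]
    (M : CoxeterMatrix B) (cs : CoxeterSystem M W)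
    (hirr : ∀ J : Set B, (∀ i ∈ J, ∀ j ∉ J, M i j = 2) → J = ∅ ∨ J = Set.univ)
    (δI : Equiv.Perm B) (δW : W ≃* W)
    (hδ : ∀ i : B, δW (cs.simple i) = cs.simple (δI i))
    (w₀ : W)
    (J : Set B) (hJ : δI '' J = J)
    (hJmeets : (twClass δW w₀ ∩ (parab cs J : Set W)).Nonempty)
    (hJmin : ∀ J'' : Set B, δI '' J'' = J'' →
      (twClass δW w₀ ∩ (parab cs J'' : Set W)).Nonempty → ¬ J'' ⊂ J)
    (w : W) (hw : w ∈ twClass δW w₀ ∩ (parab cs J : Set W))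
    (J' : Set B) (hJ' : δI '' J' = J')
    (x : W) :
    x * w * (δW x)⁻¹ ∈ parab cs J' ↔
      ∃ x' ∈ parab cs J', ∃ x₁ : W,
        δW x₁ = x₁ ∧ IsMinDoubleCoset cs J' J x₁ ∧ MapsSimples cs J J' x₁ ∧
        x = x' * x₁ := by

  have hJsymm : δI.symm '' J = J := by
    conv_lhs => rw [← hJ]
    rw [Equiv.symm_image_image]
  have hJ'symm : δI.symm '' J' = J' := by
    conv_lhs => rw [← hJ']
    rw [Equiv.symm_image_image]
  have hδsymm : ∀ i : B, δW.symm (cs.simple i) = cs.simple (δI.symm i) :=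
    S18.delta_symm_simple cs δI δW hδ
  constructor
  · intro hx
    obtain ⟨x₁, hmin, v, hv, u, hu, hxdecomp⟩ := S18.exists_min cs J' J x
    set w₁ := u * w * (δW u)⁻¹ with hw₁def
    have hw₁J : w₁ ∈ parab cs J :=
      mul_mem (mul_mem hu hw.2) (inv_mem (S18.delta_parab cs δI δW hJ hδ hu))
    have hw₁C : w₁ ∈ twClass δW w₀ := S18.twClass_conj δW w₀ hw.1 u
    have hc : x₁ * w₁ * (δW x₁)⁻¹ ∈ parab cs J' := by
      have hcompute : x₁ * w₁ * (δW x₁)⁻¹ = v⁻¹ * (x * w * (δW x)⁻¹) * (δW v) := by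
        rw [hxdecomp, hw₁def, map_mul, map_mul]
        group
      rw [hcompute]
      exact mul_mem (mul_mem (inv_mem hv) hx) (S18.delta_parab cs δI δW hJ' hδ hv)
    have hδx₁min : IsMinDoubleCoset cs J' J (δW x₁) := by
      intro a ha b hb
      have h1 : a * δW x₁ * b = δW (δW.symm a * x₁ * δW.symm b) := by
        rw [map_mul, map_mul, MulEquiv.apply_symm_apply, MulEquiv.apply_symm_apply]
      rw [h1, S18.delta_length cs δI δW hδ, S18.delta_length cs δI δW hδ]
      exact hmin _ (S18.delta_parab cs δI.symm δW.symm hJ'symm hδsymm ha)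
        _ (S18.delta_parab cs δI.symm δW.symm hJsymm hδsymm hb)
    have hδx₁eq : δW x₁ = x₁ :=
      S18.min_unique cs hmin hδx₁min (inv_mem hc) hw₁J (by group)
    rw [hδx₁eq] at hc
    set K : Set B := {j | j ∈ J ∧ ∃ j' ∈ J', x₁ * cs.simple j * x₁⁻¹ = cs.simple j'}
      with hKdef
    have hwK : w₁ ∈ parab cs K := S18.kilmoyer cs hmin w₁ hw₁J hc
    have hKsub : K ⊆ J := fun j hj => hj.1
    have hx₁symm : δW.symm x₁ = x₁ := by
      conv_lhs => rw [← hδx₁eq]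
      rw [MulEquiv.symm_apply_apply]
    have hKstable : δI '' K = K := by
      apply Set.eq_of_subset_of_subset
      · rintro _ ⟨j, ⟨hjJ, j', hj', hconj⟩, rfl⟩
        refine ⟨by rw [← hJ]; exact Set.mem_image_of_mem _ hjJ, δI j', ?_, ?_⟩
        · rw [← hJ']; exact Set.mem_image_of_mem _ hj'
        · have := congrArg δW hconj
          rwa [map_mul, map_mul, map_inv, hδ, hδ, hδx₁eq] at this
      · rintro j ⟨hjJ, j', hj', hconj⟩
        refine ⟨δI.symm j, ⟨?_, δI.symm j', ?_, ?_⟩, Equiv.apply_symm_apply δI j⟩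
        · rw [← hJsymm]; exact Set.mem_image_of_mem _ hjJ
        · rw [← hJ'symm]; exact Set.mem_image_of_mem _ hj'
        · have := congrArg δW.symm hconj
          rwa [map_mul, map_mul, map_inv, hδsymm, hδsymm, hx₁symm] at this
    have hKJ : K = J := by
      by_contra hne
      exact hJmin K hKstable ⟨w₁, hw₁C, hwK⟩ (HasSubset.Subset.ssubset_of_ne hKsub hne)
    have hms : MapsSimples cs J J' x₁ := by
      intro j hj
      rw [← hKJ] at hj
      obtain ⟨_, j', hj', hconj⟩ := hj
      exact ⟨j', hj', hconj⟩
    refine ⟨v * (x₁ * u * x₁⁻¹), mul_mem hv (S18.conj_parab cs hms hu), x₁,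
      hδx₁eq, hmin, hms, ?_⟩
    rw [hxdecomp]
    group
  · rintro ⟨x', hx', x₁, hδx₁, hminx₁, hms, rfl⟩
    have h1 : (x' * x₁) * w * (δW (x' * x₁))⁻¹ = x' * (x₁ * w * x₁⁻¹) * (δW x')⁻¹ := by
      rw [map_mul, hδx₁]
      group
    rw [h1]
    exact mul_mem (mul_mem hx' (S18.conj_parab cs hms hw.2))
      (inv_mem (S18.delta_parab cs δI δW hJ' hδ hx'))



end
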